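/- If G is a finite simple connected bipartite graph with partite sets A and B satisfying |A| ≥ |B|, then for any finite simple graph H, ξ(G⊙H) = |B|·n(H) + |A|. -/

import Mathlib

universe u v

variable {V : Type u} {W : Type v}

/-- A distance-equalizer set of a graph: for every pair of distinct vertices outside `S`
there is a vertex of `S` equidistant to both. -/
def IsDistEqSet {α : Type*} (G : SimpleGraph α) (S : Set α) : Prop :=
  ∀ ⦃x y : α⦄, x ∉ S → y ∉ S → x ≠ y → ∃ w ∈ S, G.dist w x = G.dist w y

/-- The equidistant dimension of a graph: the minimum cardinality of a distance-equalizer set. -/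
noncomputable def eqdim {α : Type*} (G : SimpleGraph α) : ℕ :=
  sInf {n | ∃ S : Set α, IsDistEqSet G S ∧ S.ncard = n}

/-- The bisector of two vertices: vertices equidistant to both. -/
def bisector {α : Type*} (G : SimpleGraph α) (x y : α) : Set α :=
  {w | G.dist w x = G.dist w y}

/-- The empty bisector graph of `G`: two distinct vertices are adjacent iff their bisector
in `G` is empty. -/
def emptyBisector {α : Type*} (G : SimpleGraph α) : SimpleGraph α where
  Adj x y := x ≠ y ∧ bisector G x y = ∅
  symm := by
    constructor
    rintro x y ⟨h1, h2⟩
    refine ⟨h1.symm, Set.eq_empty_iff_forall_notMem.mpr fun w hw => ?_⟩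
    exact Set.eq_empty_iff_forall_notMem.mp h2 w
      ((show G.dist w y = G.dist w x from hw).symm)
  loopless := ⟨fun _ h => h.1 rfl⟩

/-- A vertex cover of a graph: a set of vertices meeting every edge. -/
def IsVertexCover {α : Type*} (G : SimpleGraph α) (C : Set α) : Prop :=
  ∀ ⦃x y : α⦄, G.Adj x y → x ∈ C ∨ y ∈ C

/-- An independent set of a graph: a set of pairwise non-adjacent vertices. -/
def IsIndepSet {α : Type*} (G : SimpleGraph α) (A : Set α) : Prop :=
  ∀ ⦃x y : α⦄, x ∈ A → y ∈ A → ¬ G.Adj x y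

/-- The vertex cover number `β(G)`. -/
noncomputable def vcNum {α : Type*} (G : SimpleGraph α) : ℕ :=
  sInf {n | ∃ C : Set α, IsVertexCover G C ∧ C.ncard = n}

/-- The independence number `α(G)`. -/
noncomputable def indepNum {α : Type*} (G : SimpleGraph α) : ℕ :=
  sSup {n | ∃ A : Set α, IsIndepSet G A ∧ A.ncard = n}

/-- A forward-equalized pair `(X, Y)` of `G`: `X ∪ Y = V(G)` and for every
`a ∈ X \ Y` and `b ∈ Y \ X` there is `w` with `d(w,a) = d(w,b) + 1`. -/
def IsForwardEqualizedPair {α : Type*} (G : SimpleGraph α) (X Y : Set α) : Prop :=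
  X ∪ Y = Set.univ ∧
  ∀ ⦃a⦄, a ∈ X \ Y → ∀ ⦃b⦄, b ∈ Y \ X → ∃ w, G.dist w a = G.dist w b + 1

/-- `β*(G)`: the minimum of `|X ∩ Y|` over all pairs of vertex covers `X, Y` of the
empty bisector graph of `G` such that `(X, Y)` is a forward-equalized pair of `G`. -/
noncomputable def betaStar {α : Type*} (G : SimpleGraph α) : ℕ :=
  sInf {n | ∃ X Y : Set α,
    IsVertexCover (emptyBisector G) X ∧ IsVertexCover (emptyBisector G) Y ∧
    IsForwardEqualizedPair G X Y ∧ (X ∩ Y).ncard = n}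

/-- The corona product `G ⊙ H`: one copy of `H` for each vertex `i` of `G` (the vertices
`Sum.inr (i, w)`), with `i` joined to every vertex of its copy. -/
def corona (G : SimpleGraph V) (H : SimpleGraph W) : SimpleGraph (V ⊕ V × W) where
  Adj x y :=
    match x, y with
    | Sum.inl a, Sum.inl b => G.Adj a b
    | Sum.inl a, Sum.inr p => a = p.1
    | Sum.inr p, Sum.inl a => a = p.1
    | Sum.inr p, Sum.inr q => p.1 = q.1 ∧ H.Adj p.2 q.2
  symm := by
    constructor
    rintro (a | p) (b | q) h
    · exact h.symm
    · exact h
    · exact h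
    · exact ⟨h.1.symm, h.2.symm⟩
  loopless := by
    constructor
    rintro (a | p) h
    · exact G.irrefl h
    · exact H.irrefl h.2

open SimpleGraph

namespace CoronaAux

variable {G : SimpleGraph V} {H : SimpleGraph W}

def cproj : V ⊕ V × W → V
  | Sum.inl a => a
  | Sum.inr p => p.1

lemma corona_adj_cproj {x y : V ⊕ V × W} (h : (corona G H).Adj x y) :
    G.Adj (cproj x) (cproj y) ∨ cproj x = cproj y := by
  rcases x with a | p <;> rcases y with b | q
  · exact Or.inl h
  · exact Or.inr h
  · exact Or.inr (Eq.symm h)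
  · exact Or.inr h.1

lemma adj_inr_cproj {x : V ⊕ V × W} {a : V} {w : W}
    (h : (corona G H).Adj x (Sum.inr (a, w))) : cproj x = a := by
  rcases x with b | p
  · exact h
  · exact h.1

/-- Graph hom from `G` into the corona. -/
def inlHom (G : SimpleGraph V) (H : SimpleGraph W) : G →g corona G H :=
  ⟨Sum.inl, fun h => h⟩

lemma dist_cproj_le_length (hG : G.Connected) {x y : V ⊕ V × W}
    (p : (corona G H).Walk x y) : G.dist (cproj x) (cproj y) ≤ p.length := by
  induction p with
  | nil => simp
  | @cons x z y h q ih =>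
    rw [Walk.length_cons]
    rcases corona_adj_cproj h with h' | h'
    · calc G.dist (cproj x) (cproj y)
          ≤ G.dist (cproj x) (cproj z) + G.dist (cproj z) (cproj y) := hG.dist_triangle
        _ ≤ 1 + q.length := by
            have : G.dist (cproj x) (cproj z) ≤ 1 := by
              simpa using SimpleGraph.dist_le h'.toWalk
            omega
        _ = q.length + 1 := by omega
    · rw [h']; omega

lemma length_ge_to_leaf_aux (hG : G.Connected) {a : V} {w : W} :
    ∀ {x y : V ⊕ V × W} (p : (corona G H).Walk x y), y = Sum.inr (a, w) →
      cproj x ≠ a → G.dist (cproj x) a + 1 ≤ p.length := by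
  intro x y p
  induction p with
  | nil => rintro rfl hx; exact absurd rfl hx
  | @cons x z _ h q ih =>
    rintro rfl hx
    rw [Walk.length_cons]
    by_cases hz : cproj z = a
    · -- next vertex already projects to a
      have hq1 : 1 ≤ q.length := by
        cases q with
        | nil =>
          exact absurd (adj_inr_cproj h) hx
        | cons h' q' => simp
      have hd : G.dist (cproj x) a ≤ 1 := by
        rcases corona_adj_cproj h with h' | h'
        · rw [hz] at h'; simpa using SimpleGraph.dist_le h'.toWalk
        · rw [h', hz]; simp [SimpleGraph.dist_self]
      omega
    · have := ih rfl hz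
      have htri : G.dist (cproj x) a ≤ G.dist (cproj x) (cproj z) + G.dist (cproj z) a :=
        hG.dist_triangle
      have hd : G.dist (cproj x) (cproj z) ≤ 1 := by
        rcases corona_adj_cproj h with h' | h'
        · simpa using SimpleGraph.dist_le h'.toWalk
        · rw [h']; simp [SimpleGraph.dist_self]
      omega

lemma length_ge_to_leaf (hG : G.Connected) {a : V} {w : W} {x : V ⊕ V × W}
    (p : (corona G H).Walk x (Sum.inr (a, w))) (hx : cproj x ≠ a) :
    G.dist (cproj x) a + 1 ≤ p.length :=
  length_ge_to_leaf_aux hG p rfl hx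

lemma length_ge_leaf_leaf_aux (hG : G.Connected) {a : V} {w : W} :
    ∀ {x y : V ⊕ V × W} (p : (corona G H).Walk x y), y = Sum.inr (a, w) →
      ∀ {u : V} {z : W}, x = Sum.inr (u, z) → u ≠ a → G.dist u a + 2 ≤ p.length := by
  intro x y p
  induction p with
  | nil =>
    rintro rfl u z h hne
    injection h with h'
    exact absurd (congrArg Prod.fst h').symm hne
  | @cons x t _ h q ih =>
    rintro rfl u z rfl hne
    rw [Walk.length_cons]
    rcases t with c | p'
    · -- t = inl c with c = u
      have hc : c = u := h
      have h2 : G.dist c a + 1 ≤ q.length :=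
        length_ge_to_leaf (H := H) hG q (show c ≠ a from hc ▸ hne)
      rw [← hc]
      omega
    · -- t = inr p' with p'.1 = u
      have hc : u = p'.1 := h.1
      have := ih rfl (u := p'.1) (z := p'.2) rfl (hc ▸ hne)
      rw [← hc] at this
      omega

lemma length_ge_leaf_leaf (hG : G.Connected) {a u : V} {w z : W}
    (p : (corona G H).Walk (Sum.inr (u, z)) (Sum.inr (a, w))) (hne : u ≠ a) :
    G.dist u a + 2 ≤ p.length :=
  length_ge_leaf_leaf_aux hG p rfl rfl hne

lemma corona_adj_inl_inr (a : V) (w : W) : (corona G H).Adj (Sum.inl a) (Sum.inr (a, w)) := rfl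

lemma corona_adj_inr_inl (a : V) (w : W) : (corona G H).Adj (Sum.inr (a, w)) (Sum.inl a) := rfl

lemma corona_reachable (hG : G.Connected) (x y : V ⊕ V × W) :
    (corona G H).Reachable x y := by
  have key : ∀ t : V ⊕ V × W, (corona G H).Reachable t (Sum.inl (cproj t)) := by
    rintro (a | p)
    · exact Reachable.refl _
    · exact (corona_adj_inr_inl p.1 p.2).reachable
  have mid : (corona G H).Reachable (Sum.inl (cproj x)) (Sum.inl (cproj y)) :=
    Reachable.map (inlHom G H) (hG (cproj x) (cproj y))
  exact ((key x).trans mid).trans (key y).symm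

lemma corona_connected (hG : G.Connected) : (corona G H).Connected := by
  rw [connected_iff]
  exact ⟨fun x y => corona_reachable hG x y, ⟨Sum.inl hG.nonempty.some⟩⟩

lemma corona_dist_inl_inl (hG : G.Connected) (u v : V) :
    (corona G H).dist (Sum.inl u) (Sum.inl v) = G.dist u v := by
  apply le_antisymm
  · obtain ⟨p, hp⟩ := hG.exists_walk_length_eq_dist u v
    have := SimpleGraph.dist_le (p.map (inlHom G H))
    rwa [Walk.length_map, hp] at this
  · obtain ⟨p, hp⟩ :=
      (corona_reachable (H := H) hG (Sum.inl u) (Sum.inl v)).exists_walk_length_eq_dist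
    have := dist_cproj_le_length hG p
    rwa [hp] at this

lemma corona_dist_inl_inr (hG : G.Connected) (u a : V) (w : W) :
    (corona G H).dist (Sum.inl u) (Sum.inr (a, w)) = G.dist u a + 1 := by
  apply le_antisymm
  · obtain ⟨p, hp⟩ := hG.exists_walk_length_eq_dist u a
    have := SimpleGraph.dist_le ((p.map (inlHom G H)).concat (corona_adj_inl_inr a w))
    have h2 := Walk.length_concat (p.map (inlHom G H)) (corona_adj_inl_inr a w)
    rw [Walk.length_map, hp] at h2
    rw [h2] at this
    exact this
  · by_cases hua : u = a
    · subst hua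
      have h0 := (corona_reachable (H := H) hG (Sum.inl u) (Sum.inr (u, w))).pos_dist_of_ne
        (by simp)
      rw [SimpleGraph.dist_self]
      omega
    · obtain ⟨p, hp⟩ :=
        (corona_reachable (H := H) hG (Sum.inl u) (Sum.inr (a, w))).exists_walk_length_eq_dist
      have := length_ge_to_leaf hG p hua
      rwa [hp] at this

lemma corona_dist_inr_inl (hG : G.Connected) (u a : V) (w : W) :
    (corona G H).dist (Sum.inr (a, w)) (Sum.inl u) = G.dist u a + 1 := by
  rw [SimpleGraph.dist_comm]; exact corona_dist_inl_inr hG u a w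

lemma corona_dist_inr_inr (hG : G.Connected) {u a : V} (hne : u ≠ a) (z w : W) :
    (corona G H).dist (Sum.inr (u, z)) (Sum.inr (a, w)) = G.dist u a + 2 := by
  apply le_antisymm
  · obtain ⟨p, hp⟩ := hG.exists_walk_length_eq_dist u a
    have := SimpleGraph.dist_le (Walk.cons (corona_adj_inr_inl u z)
      ((p.map (inlHom G H)).concat (corona_adj_inl_inr a w)))
    have h2 := Walk.length_concat (p.map (inlHom G H)) (corona_adj_inl_inr a w)
    rw [Walk.length_map, hp] at h2
    have h3 := Walk.length_cons (corona_adj_inr_inl (G := G) (H := H) u z)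
      ((p.map (inlHom G H)).concat (corona_adj_inl_inr a w))
    rw [h3] at this
    exact this.trans ((Nat.add_le_add_right h2.le 1).trans (by omega))
  · obtain ⟨p, hp⟩ :=
      (corona_reachable (H := H) hG (Sum.inr (u, z)) (Sum.inr (a, w))).exists_walk_length_eq_dist
    have := length_ge_leaf_leaf hG p hne
    rwa [hp] at this

lemma corona_dist_same_le_two (hG : G.Connected) (a : V) (z w : W) :
    (corona G H).dist (Sum.inr (a, z)) (Sum.inr (a, w)) ≤ 2 := by
  have h := SimpleGraph.dist_le (Walk.cons (corona_adj_inr_inl (G := G) (H := H) a z)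
    (Walk.cons (corona_adj_inl_inr a w) Walk.nil))
  simpa using h

lemma corona_dist_same_adj (h : H.Adj z w) (a : V) :
    (corona G H).dist (Sum.inr (a, z)) (Sum.inr (a, w)) = 1 :=
  SimpleGraph.dist_eq_one_iff_adj.mpr ⟨rfl, h⟩

lemma corona_dist_same_nonadj (hG : G.Connected) {z w : W} (hzw : z ≠ w) (h : ¬ H.Adj z w)
    (a : V) : (corona G H).dist (Sum.inr (a, z)) (Sum.inr (a, w)) = 2 := by
  have hle := corona_dist_same_le_two (H := H) hG a z w
  have h0 := (corona_reachable (H := H) hG (Sum.inr (a, z)) (Sum.inr (a, w))).pos_dist_of_ne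
    (by simp [hzw])
  have h1 : (corona G H).dist (Sum.inr (a, z)) (Sum.inr (a, w)) ≠ 1 := by
    intro h1
    exact h (SimpleGraph.dist_eq_one_iff_adj.mp h1).2
  omega

section Bipartite

variable {A B : Set V}

lemma adj_flip (hUnion : A ∪ B = Set.univ)
    (hA : ∀ ⦃x y : V⦄, x ∈ A → y ∈ A → ¬ G.Adj x y)
    (hB : ∀ ⦃x y : V⦄, x ∈ B → y ∈ B → ¬ G.Adj x y)
    {u v : V} (h : G.Adj u v) : ¬ (u ∈ A ↔ v ∈ A) := by
  intro hiff
  by_cases hu : u ∈ A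
  · exact hA hu (hiff.mp hu) h
  · have hu' : u ∈ B := by
      have := hUnion.symm ▸ Set.mem_univ u
      exact this.resolve_left hu
    have hv' : v ∈ B := by
      have := hUnion.symm ▸ Set.mem_univ v
      exact this.resolve_left (fun hv => hu (hiff.mpr hv))
    exact hB hu' hv' h

lemma walk_parity (hUnion : A ∪ B = Set.univ)
    (hA : ∀ ⦃x y : V⦄, x ∈ A → y ∈ A → ¬ G.Adj x y)
    (hB : ∀ ⦃x y : V⦄, x ∈ B → y ∈ B → ¬ G.Adj x y)
    {u v : V} (p : G.Walk u v) : Even p.length ↔ (u ∈ A ↔ v ∈ A) := by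
  induction p with
  | nil => simp
  | @cons u z v h q ih =>
    have hflip := adj_flip hUnion hA hB h
    rw [Walk.length_cons, Nat.even_add_one, ih]
    constructor
    · intro hne
      constructor
      · intro hu
        by_contra hv
        exact hne (by tauto)
      · intro hv
        by_contra hu
        exact hne (by tauto)
    · intro hiff hzv
      exact hflip (by tauto)

lemma dist_parity (hG : G.Connected) (hUnion : A ∪ B = Set.univ)
    (hA : ∀ ⦃x y : V⦄, x ∈ A → y ∈ A → ¬ G.Adj x y)
    (hB : ∀ ⦃x y : V⦄, x ∈ B → y ∈ B → ¬ G.Adj x y)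
    (u v : V) : Even (G.dist u v) ↔ (u ∈ A ↔ v ∈ A) := by
  obtain ⟨p, hp⟩ := hG.exists_walk_length_eq_dist u v
  rw [← hp]
  exact walk_parity hUnion hA hB p

end Bipartite

lemma exists_midvertex (hG : G.Connected) (u v : V) :
    ∀ k : ℕ, k ≤ G.dist u v → ∃ m : V, G.dist u m = k ∧ G.dist m v + k = G.dist u v := by
  intro k
  induction k with
  | zero =>
    intro _
    exact ⟨u, SimpleGraph.dist_self, by simp⟩
  | succ k ih =>
    intro hk
    obtain ⟨m, h1, h2⟩ := ih (by omega)
    have hmv : G.dist m v ≠ 0 := by omega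
    obtain ⟨p, hp⟩ := hG.exists_walk_length_eq_dist m v
    cases p with
    | nil => rw [Walk.length_nil] at hp; omega
    | @cons _ m' _ h q =>
      rw [Walk.length_cons] at hp
      have hq : G.dist m' v ≤ q.length := SimpleGraph.dist_le q
      have hmm' : G.dist m m' ≤ 1 := by simpa using SimpleGraph.dist_le h.toWalk
      have ht1 : G.dist m v ≤ G.dist m m' + G.dist m' v := hG.dist_triangle
      have ht2 : G.dist u m' ≤ G.dist u m + G.dist m m' := hG.dist_triangle
      have ht3 : G.dist u v ≤ G.dist u m' + G.dist m' v := hG.dist_triangle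
      exact ⟨m', by omega, by omega⟩

variable (W)

def eqSet (A B : Set V) : Set (V ⊕ V × W) :=
  (Sum.inl '' A) ∪ (Sum.inr '' (B ×ˢ (Set.univ : Set W)))

variable {W}

@[simp] lemma mem_eqSet_inl {A B : Set V} (c : V) :
    Sum.inl c ∈ eqSet W A B ↔ c ∈ A := by
  simp [eqSet]

@[simp] lemma mem_eqSet_inr {A B : Set V} (c : V) (t : W) :
    Sum.inr (c, t) ∈ eqSet W A B ↔ c ∈ B := by
  simp [eqSet]

lemma ncard_inr_prod [Fintype W] (C : Set V) :
    (Sum.inr '' (C ×ˢ (Set.univ : Set W)) : Set (V ⊕ V × W)).ncard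
      = C.ncard * Fintype.card W := by
  rw [Set.ncard_image_of_injective _ Sum.inr_injective, ← Nat.card_coe_set_eq,
    Nat.card_congr (Equiv.Set.prod C Set.univ), Nat.card_prod,
    Nat.card_coe_set_eq, Nat.card_coe_set_eq, Set.ncard_univ,
    Nat.card_eq_fintype_card]

lemma ncard_eqSet [Fintype V] [Fintype W] (A B : Set V) :
    (eqSet W A B).ncard = B.ncard * Fintype.card W + A.ncard := by
  have hdisj : Disjoint (Sum.inl '' A : Set (V ⊕ V × W))
      (Sum.inr '' (B ×ˢ (Set.univ : Set W))) := by
    rw [Set.disjoint_left]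
    rintro _ ⟨a, _, rfl⟩ ⟨p, _, h⟩
    exact absurd h (by simp)
  rw [eqSet, Set.ncard_union_eq hdisj,
    Set.ncard_image_of_injective _ Sum.inl_injective, ncard_inr_prod]
  omega

end CoronaAux

open CoronaAux SimpleGraph in
/-- If `G` is connected bipartite with partite sets `A`, `B` and
`|A| ≥ |B|`, then `ξ(G ⊙ H) = |B|·n(H) + |A|`. -/
theorem eqdim_corona_of_bipartite [Fintype V] [Fintype W] [Nonempty W]
    (G : SimpleGraph V) (H : SimpleGraph W) (hG : G.Connected)
    (A B : Set V) (hUnion : A ∪ B = Set.univ) (hDisj : Disjoint A B)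
    (hA : _root_.IsIndepSet G A) (hB : _root_.IsIndepSet G B) (hcard : B.ncard ≤ A.ncard) :
    eqdim (corona G H) = B.ncard * Fintype.card W + A.ncard := by
  classical
  obtain ⟨w₀⟩ := ‹Nonempty W›
  have hn1 : 1 ≤ Fintype.card W := Fintype.card_pos
  have hVmem : ∀ v : V, v ∈ A ∨ v ∈ B := fun v => by
    have : v ∈ A ∪ B := hUnion.symm ▸ Set.mem_univ v
    exact this
  have hBnotA : ∀ {v : V}, v ∈ B → v ∉ A := fun hv ha => Set.disjoint_left.mp hDisj ha hv
  have hpar := dist_parity (A := A) (B := B) hG hUnion hA hB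
  have parity_ne : ∀ {u a b : V}, a ∈ A → b ∈ B → G.dist u a ≠ G.dist u b := by
    intro u a b haA hbB heq
    have h1 := hpar u a
    have h2 := hpar u b
    rw [heq] at h1
    have hb := hBnotA hbB
    tauto
  -- the canonical distance-equalizer set
  set S₀ : Set (V ⊕ V × W) := eqSet W A B with hS₀def
  have hS₀ : IsDistEqSet (corona G H) S₀ := by
    have main_lr : ∀ (b a : V) (w : W), b ∈ B → a ∈ A →
        ∃ t ∈ S₀, (corona G H).dist t (Sum.inl b) = (corona G H).dist t (Sum.inr (a, w)) := by
      intro b a w hbB haA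
      have hba : b ≠ a := fun h => hBnotA hbB (h ▸ haA)
      have hpos : 0 < G.dist b a := hG.pos_dist_of_ne hba
      have hodd : ¬ Even (G.dist b a) := by
        rw [hpar b a]
        have := hBnotA hbB
        tauto
      have hmod : G.dist b a % 2 ≠ 0 := fun h => hodd (Nat.even_iff.mpr h)
      set k := G.dist b a / 2 with hkdef
      have hk : G.dist b a = 2 * k + 1 := by omega
      obtain ⟨m, hm1, hm2⟩ := exists_midvertex hG b a (k + 1) (by omega)
      have hma : G.dist m a = k := by omega
      rcases hVmem m with hmA | hmB
      · refine ⟨Sum.inl m, by simp [hS₀def, hmA], ?_⟩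
        rw [corona_dist_inl_inl hG, corona_dist_inl_inr hG, SimpleGraph.dist_comm (u := m), hm1,
          hma]
      · have hma' : m ≠ a := fun h => hBnotA hmB (h ▸ haA)
        refine ⟨Sum.inr (m, w₀), by simp [hS₀def, hmB], ?_⟩
        rw [corona_dist_inr_inl hG, corona_dist_inr_inr hG hma', hm1, hma]
    intro x y hx hy hxy
    rcases x with b | ⟨a, z⟩ <;> rcases y with b' | ⟨a', z'⟩
    · -- both inl
      have hbB : b ∈ B := (hVmem b).resolve_left (by simpa [hS₀def] using hx)
      have hb'B : b' ∈ B := (hVmem b').resolve_left (by simpa [hS₀def] using hy)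
      have hbb' : b ≠ b' := fun h => hxy (by rw [h])
      have heven : Even (G.dist b b') := by
        rw [hpar b b']
        have h1 := hBnotA hbB
        have h2 := hBnotA hb'B
        tauto
      have hmod : G.dist b b' % 2 = 0 := Nat.even_iff.mp heven
      set k := G.dist b b' / 2 with hkdef
      have hk : G.dist b b' = k + k := by omega
      obtain ⟨m, hm1, hm2⟩ := exists_midvertex hG b b' k (by omega)
      have hmb' : G.dist m b' = k := by omega
      rcases hVmem m with hmA | hmB
      · refine ⟨Sum.inl m, by simp [hS₀def, hmA], ?_⟩
        rw [corona_dist_inl_inl hG, corona_dist_inl_inl hG, SimpleGraph.dist_comm (u := m), hm1,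
          hmb']
      · refine ⟨Sum.inr (m, w₀), by simp [hS₀def, hmB], ?_⟩
        have hmb'' : G.dist b' m = k := by rw [SimpleGraph.dist_comm]; exact hmb'
        rw [corona_dist_inr_inl hG, corona_dist_inr_inl hG, hm1, hmb'']
    · -- inl, inr
      have hbB : b ∈ B := (hVmem b).resolve_left (by simpa [hS₀def] using hx)
      have haA : a' ∈ A := by
        rcases hVmem a' with h | h
        · exact h
        · exact absurd (by simp [hS₀def, h]) hy
      exact main_lr b a' z' hbB haA
    · -- inr, inl
      have hbB : b' ∈ B := (hVmem b').resolve_left (by simpa [hS₀def] using hy)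
      have haA : a ∈ A := by
        rcases hVmem a with h | h
        · exact h
        · exact absurd (by simp [hS₀def, h]) hx
      obtain ⟨t, htS, htd⟩ := main_lr b' a z hbB haA
      exact ⟨t, htS, htd.symm⟩
    · -- both inr
      have haA : a ∈ A := by
        rcases hVmem a with h | h
        · exact h
        · exact absurd (by simp [hS₀def, h]) hx
      have ha'A : a' ∈ A := by
        rcases hVmem a' with h | h
        · exact h
        · exact absurd (by simp [hS₀def, h]) hy
      by_cases haa : a = a'
      · subst haa
        refine ⟨Sum.inl a, by simp [hS₀def, haA], ?_⟩
        rw [corona_dist_inl_inr hG, corona_dist_inl_inr hG]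
      · have heven : Even (G.dist a a') := by
          rw [hpar a a']
          tauto
        have hmod : G.dist a a' % 2 = 0 := Nat.even_iff.mp heven
        set k := G.dist a a' / 2 with hkdef
        have hk : G.dist a a' = k + k := by omega
        obtain ⟨m, hm1, hm2⟩ := exists_midvertex hG a a' k (by omega)
        have hma' : G.dist m a' = k := by omega
        rcases hVmem m with hmA | hmB
        · refine ⟨Sum.inl m, by simp [hS₀def, hmA], ?_⟩
          rw [corona_dist_inl_inr hG, corona_dist_inl_inr hG, SimpleGraph.dist_comm (u := m),
            hm1, hma']
        · have h1 : m ≠ a := fun h => hBnotA hmB (h ▸ haA)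
          have h2 : m ≠ a' := fun h => hBnotA hmB (h ▸ ha'A)
          refine ⟨Sum.inr (m, w₀), by simp [hS₀def, hmB], ?_⟩
          rw [corona_dist_inr_inr hG h1, corona_dist_inr_inr hG h2,
            SimpleGraph.dist_comm (u := m) (v := a), hm1, hma']
  have hncard : S₀.ncard = B.ncard * Fintype.card W + A.ncard := ncard_eqSet A B
  -- lower bound
  have lower : ∀ S : Set (V ⊕ V × W), IsDistEqSet (corona G H) S →
      B.ncard * Fintype.card W + A.ncard ≤ S.ncard := by
    intro S hS
    have fiber : ∀ i : V, ∃ t ∈ S, cproj t = i := by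
      intro i
      by_cases h1 : Sum.inl i ∈ S
      · exact ⟨Sum.inl i, h1, rfl⟩
      by_cases h2 : ∀ z : W, Sum.inr (i, z) ∈ S
      · exact ⟨Sum.inr (i, w₀), h2 w₀, rfl⟩
      push_neg at h2
      obtain ⟨z, hz⟩ := h2
      obtain ⟨t, htS, htd⟩ := hS hz h1 (by simp)
      refine ⟨t, htS, ?_⟩
      rcases t with u | ⟨u, s⟩
      · exfalso
        rw [corona_dist_inl_inr hG, corona_dist_inl_inl hG] at htd
        omega
      · by_contra hne
        have hne' : u ≠ i := hne
        rw [corona_dist_inr_inr hG hne', corona_dist_inr_inl hG,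
          SimpleGraph.dist_comm (u := i)] at htd
        omega
    have cross : ∀ {a b : V} {za zb : W}, a ∈ A → b ∈ B → Sum.inr (a, za) ∉ S →
        Sum.inr (b, zb) ∉ S → False := by
      intro a b za zb haA hbB hna hnb
      have hab : a ≠ b := fun h => hBnotA hbB (h ▸ haA)
      obtain ⟨t, htS, htd⟩ := hS hna hnb (by simp [hab])
      rcases t with u | ⟨u, s⟩
      · rw [corona_dist_inl_inr hG, corona_dist_inl_inr hG] at htd
        exact parity_ne (u := u) haA hbB (by omega)
      · by_cases hua : u = a
        · subst hua
          have hle := corona_dist_same_le_two (H := H) hG u s za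
          rw [corona_dist_inr_inr hG hab] at htd
          have hpos : 0 < G.dist u b := hG.pos_dist_of_ne hab
          omega
        · by_cases hub : u = b
          · subst hub
            have hle := corona_dist_same_le_two (H := H) hG u s zb
            rw [corona_dist_inr_inr hG hua] at htd
            have hpos : 0 < G.dist u a := hG.pos_dist_of_ne hua
            omega
          · rw [corona_dist_inr_inr hG hua, corona_dist_inr_inr hG hub] at htd
            exact parity_ne (u := u) haA hbB (by omega)
    choose g hgS hgproj using fiber
    have hgInj : ∀ C : Set V, (g '' C).ncard = C.ncard := by
      intro C
      apply Set.ncard_image_of_injOn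
      intro a _ a' _ h
      rw [← hgproj a, ← hgproj a', h]
    have count : ∀ C D : Set V, Disjoint C D → (∀ c ∈ C, ∀ z : W, Sum.inr (c, z) ∈ S) →
        C.ncard * Fintype.card W + D.ncard ≤ S.ncard := by
      intro C D hCD hCs
      have hTS : (Sum.inr '' (C ×ˢ (Set.univ : Set W)) : Set (V ⊕ V × W)) ∪ g '' D ⊆ S := by
        rintro _ (⟨p, hp, rfl⟩ | ⟨d, _, rfl⟩)
        · exact hCs p.1 hp.1 p.2
        · exact hgS d
      have hdisj : Disjoint (Sum.inr '' (C ×ˢ (Set.univ : Set W)) : Set (V ⊕ V × W)) (g '' D) := by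
        rw [Set.disjoint_left]
        rintro _ ⟨p, hp, rfl⟩ ⟨d, hd, h⟩
        have hproj : cproj (g d) = d := hgproj d
        rw [h] at hproj
        have : p.1 = d := hproj
        exact Set.disjoint_left.mp hCD hp.1 (this ▸ hd)
      calc C.ncard * Fintype.card W + D.ncard
          = ((Sum.inr '' (C ×ˢ (Set.univ : Set W)) : Set (V ⊕ V × W)) ∪ g '' D).ncard := by
            rw [Set.ncard_union_eq hdisj, ncard_inr_prod, hgInj]
        _ ≤ S.ncard := Set.ncard_le_ncard hTS S.toFinite
    by_cases hcase : ∀ b ∈ B, ∀ z : W, Sum.inr (b, z) ∈ S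
    · exact count B A hDisj.symm hcase
    · push_neg at hcase
      obtain ⟨b0, hb0, z0, hz0⟩ := hcase
      have hAleaves : ∀ a ∈ A, ∀ z : W, Sum.inr (a, z) ∈ S := by
        intro a ha z
        by_contra hnn
        exact cross ha hb0 hnn hz0
      have h1 : A.ncard * Fintype.card W + B.ncard ≤ S.ncard := count A B hDisj hAleaves
      obtain ⟨d, hd⟩ := Nat.exists_eq_add_of_le hcard
      have hdn : d ≤ d * Fintype.card W := Nat.le_mul_of_pos_right d hn1
      have hexp : (B.ncard + d) * Fintype.card W = B.ncard * Fintype.card W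
          + d * Fintype.card W := add_mul _ _ _
      rw [hd] at h1 ⊢
      linarith
  have hmem : (B.ncard * Fintype.card W + A.ncard) ∈
      {k | ∃ S : Set (V ⊕ V × W), IsDistEqSet (corona G H) S ∧ S.ncard = k} :=
    ⟨S₀, hS₀, hncard⟩
  rw [eqdim]
  apply le_antisymm
  · exact Nat.sInf_le hmem
  · apply le_csInf ⟨_, hmem⟩
    rintro k ⟨S, hSk, rfl⟩
    exact lower S hSk
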